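/- Let μ be a non-atomic Borel probability measure on [0,1]. For every q ∈ ℝ and all a, b > 0, β_a(q) = β_b(q); that is, the multifractal moment function β_a(q) := inf{ β ∈ ℝ : limsup_{r→0⁺} r^β Σ_{B ∈ B_r^*} μ(B̄^a)^q = 0 } does not depend on the value of the enlargement parameter a > 0. -/

import Mathlib

open MeasureTheory Filter Set
open scoped Classical

noncomputable section

/-- The enlargement `B̄^a` of the interval `[s,t]` by the factor `1+a` about its centre. -/
def enlarge (a s t : ℝ) : Set ℝ :=
  Set.Icc (s - a * (t - s) / 2) (t + a * (t - s) / 2)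

/-- The moment sum `Σ_{B ∈ B_r^*} μ(B̄^a)^q` over grid intervals of length `r`
whose interior meets the support of `μ` (i.e. with `μ(B) > 0`). -/
def gridSum (μ : Measure ℝ) (a q R : ℝ) : ℝ :=
  ∑' m : ℤ, if 0 < μ (Set.Icc ((m : ℝ) * R) (((m : ℝ) + 1) * R))
    then (μ (enlarge a ((m : ℝ) * R) (((m : ℝ) + 1) * R))).toReal ^ q else 0

/-- The coarse multifractal moment function
`β_a(q) = inf{β : limsup_{r→0⁺} r^β Σ_{B ∈ B_r^*} μ(B̄^a)^q = 0}`.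
(For the nonnegative quantity `r^β · Σ…`, vanishing of the `limsup` as `r → 0⁺`
is the same as convergence to `0`.) -/
def betaA (μ : Measure ℝ) (a q : ℝ) : ℝ :=
  sInf {β : ℝ | Filter.Tendsto (fun R => R ^ β * gridSum μ a q R)
    (nhdsWithin 0 (Set.Ioi 0)) (nhds 0)}

/-- `F` is a "fractal subset" of `[0,1]`: compact, Lebesgue-null, containing `0` and `1`. -/
def IsFractalSubset (F : Set ℝ) : Prop :=
  IsCompact F ∧ F ⊆ Set.Icc 0 1 ∧ (0 : ℝ) ∈ F ∧ (1 : ℝ) ∈ F ∧ MeasureTheory.volume F = 0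

/-- The complementary intervals `I_n = (l n, r n)` of `F` in `[0,1]`, enumerated with
nonincreasing lengths. -/
structure FractalComplement (F : Set ℝ) where
  l : ℕ → ℝ
  r : ℕ → ℝ
  lt : ∀ n, l n < r n
  disj : Pairwise fun n m => Disjoint (Set.Ioo (l n) (r n)) (Set.Ioo (l m) (r m))
  union : (⋃ n, Set.Ioo (l n) (r n)) = Set.Icc (0 : ℝ) 1 \ F
  mono : ∀ n, r (n + 1) - l (n + 1) ≤ r n - l n

/-- The length `|I_n|` of the `n`-th complementary interval. -/
def FractalComplement.len {F : Set ℝ} (c : FractalComplement F) (n : ℕ) : ℝ := c.r n - c.l n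

/-- The enlargement `Ī_n^a` of the closure of the complementary interval `I_n`. -/
def FractalComplement.I {F : Set ℝ} (c : FractalComplement F) (a : ℝ) (n : ℕ) : Set ℝ :=
  enlarge a (c.l n) (c.r n)

/-- The lacunarity condition with constant `lam`: every interval `[x-r, x+r]` with `x ∈ F`
and `0 < r ≤ 1` contains a complementary interval of length at least `lam * r`. -/
def Lacunary {F : Set ℝ} (c : FractalComplement F) (lam : ℝ) : Prop :=
  ∀ x ∈ F, ∀ R : ℝ, 0 < R → R ≤ 1 → ∃ n,
    Set.Ioo (c.l n) (c.r n) ⊆ Set.Icc (x - R) (x + R) ∧ lam * R ≤ c.len n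

/-- The topological support of `μ` is exactly `F`. -/
def HasSupport (μ : Measure ℝ) (F : Set ℝ) : Prop :=
  μ Fᶜ = 0 ∧ ∀ x ∈ F, ∀ ε : ℝ, 0 < ε → 0 < μ (Set.Ioo (x - ε) (x + ε))

namespace Stmt5

def gterm (μ : Measure ℝ) (a q R : ℝ) (m : ℤ) : ℝ :=
  if 0 < μ (Set.Icc ((m : ℝ) * R) (((m : ℝ) + 1) * R))
    then (μ (enlarge a ((m : ℝ) * R) (((m : ℝ) + 1) * R))).toReal ^ q else 0

lemma gridSum_eq (μ : Measure ℝ) (a q R : ℝ) : gridSum μ a q R = ∑' m, gterm μ a q R m := rfl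

lemma gterm_nonneg (μ : Measure ℝ) (a q R : ℝ) (m : ℤ) : 0 ≤ gterm μ a q R m := by
  unfold gterm; split
  · exact Real.rpow_nonneg ENNReal.toReal_nonneg q
  · exact le_refl 0

lemma gterm_eq_zero (μ : Measure ℝ) [NullSingletonClass μ] (hsupp : μ (Set.Icc (0 : ℝ) 1)ᶜ = 0)
    (a q : ℝ) {R : ℝ} (hR : 0 < R) {m : ℤ} (hm : m ∉ Finset.Icc (0:ℤ) ⌈1/R⌉) :
    gterm μ a q R m = 0 := by
  rw [Finset.mem_Icc, not_and_or] at hm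
  have hz : μ (Set.Icc ((m : ℝ) * R) (((m : ℝ) + 1) * R)) = 0 := by
    rcases hm with hm | hm
    · push_neg at hm
      have hm1 : (m : ℝ) + 1 ≤ 0 := by
        have : (m : ℝ) ≤ -1 := by exact_mod_cast Int.le_of_lt_add_one (by simpa using hm)
        linarith
      have hsub : Set.Icc ((m : ℝ) * R) (((m : ℝ) + 1) * R) ⊆ Set.Iio 0 ∪ {(0:ℝ)} := by
        intro x hx
        have hx2 : x ≤ 0 := hx.2.trans (by nlinarith)
        rcases lt_or_eq_of_le hx2 with h | h
        · exact Or.inl h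
        · exact Or.inr (by simp [h])
      refine measure_mono_null hsub (measure_union_null ?_ (measure_singleton 0))
      refine measure_mono_null ?_ hsupp
      intro x hx
      simp only [Set.mem_Iio] at hx
      simp only [Set.mem_compl_iff, Set.mem_Icc, not_and_or, not_le]
      exact Or.inl hx
    · push_neg at hm
      have h1 : (1:ℝ)/R < (m:ℝ) := lt_of_le_of_lt (Int.le_ceil _) (by exact_mod_cast hm)
      have h2 : (1:ℝ) < (m:ℝ) * R := by
        rw [div_lt_iff₀ hR] at h1; linarith
      have hsub : Set.Icc ((m : ℝ) * R) (((m : ℝ) + 1) * R) ⊆ (Set.Icc (0:ℝ) 1)ᶜ := by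
        intro x hx
        simp only [Set.mem_compl_iff, Set.mem_Icc, not_and_or, not_le]
        exact Or.inr (lt_of_lt_of_le h2 hx.1)
      exact measure_mono_null hsub hsupp
  simp [gterm, hz]

lemma summable_gterm (μ : Measure ℝ) [NullSingletonClass μ] (hsupp : μ (Set.Icc (0 : ℝ) 1)ᶜ = 0)
    (a q : ℝ) {R : ℝ} (hR : 0 < R) : Summable (gterm μ a q R) :=
  summable_of_ne_finset_zero (s := Finset.Icc (0:ℤ) ⌈1/R⌉)
    (fun _ hm => gterm_eq_zero μ hsupp a q hR hm)

lemma gridSum_nonneg (μ : Measure ℝ) (a q R : ℝ) : 0 ≤ gridSum μ a q R :=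
  tsum_nonneg (gterm_nonneg μ a q R)

lemma Icc_subset_enlarge {a s t : ℝ} (ha : 0 ≤ a) (hst : s ≤ t) :
    Set.Icc s t ⊆ enlarge a s t := by
  apply Set.Icc_subset_Icc <;> nlinarith

lemma measure_Icc_le_sum (μ : Measure ℝ) [NullSingletonClass μ] {R : ℝ} (s : ℝ) (j : ℕ) :
    μ (Set.Icc s (s + j * R)) ≤
      ∑ i ∈ Finset.range j, μ (Set.Icc (s + i * R) (s + (i + 1) * R)) := by
  induction j with
  | zero => simp
  | succ n ih =>
    rcases le_or_gt R 0 with hR | hR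
    · -- degenerate: not needed if R > 0, but handle: (n+1)*R ≤ n*R
      have h1 : s + (n+1:ℕ) * R ≤ s + n * R := by push_cast; nlinarith
      calc μ (Set.Icc s (s + (n+1:ℕ) * R)) ≤ μ (Set.Icc s (s + n * R)) :=
            measure_mono (Set.Icc_subset_Icc le_rfl h1)
        _ ≤ ∑ i ∈ Finset.range n, μ (Set.Icc (s + i * R) (s + (i + 1) * R)) := ih
        _ ≤ _ := Finset.sum_le_sum_of_subset (Finset.range_subset_range.2 (Nat.le_succ n))
    · have h1 : s ≤ s + n * R := by nlinarith [Nat.cast_nonneg (α := ℝ) n]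
      have h2 : s + n * R ≤ s + (n+1:ℕ) * R := by push_cast; nlinarith
      have hun : Set.Icc s (s + n * R) ∪ Set.Icc (s + n * R) (s + (n+1:ℕ) * R)
          = Set.Icc s (s + (n+1:ℕ) * R) := Set.Icc_union_Icc_eq_Icc h1 h2
      calc μ (Set.Icc s (s + (n+1:ℕ) * R))
          ≤ μ (Set.Icc s (s + n * R)) + μ (Set.Icc (s + n * R) (s + (n+1:ℕ) * R)) := by
            rw [← hun]; exact measure_union_le _ _
        _ ≤ _ := by
            rw [Finset.sum_range_succ]
            refine add_le_add ih (le_of_eq ?_)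
            congr 2 <;> push_cast <;> ring

lemma enlarge_grid (e s R : ℝ) (hR : 0 < R) :
    enlarge e s (s + R) = Set.Icc (s - e * R / 2) (s + R + e * R / 2) := by
  unfold enlarge; congr 2 <;> ring

lemma termC (μ : Measure ℝ) [IsProbabilityMeasure μ] [NullSingletonClass μ]
    {c d q : ℝ} (hc : 0 < c) (hd : 0 < d) (hq : 0 ≤ q) {R : ℝ} (hR : 0 < R) (m : ℤ) :
    gterm μ d q R m ≤ ((2 * ⌈d/2⌉₊ + 1 : ℕ) : ℝ) ^ q *
      ∑ i ∈ Finset.range (2 * ⌈d/2⌉₊ + 1), gterm μ c q R (m + ((i : ℤ) - ⌈d/2⌉₊)) := by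
  set K : ℕ := ⌈d/2⌉₊ with hK
  set N : ℕ := 2 * K + 1 with hN
  by_cases hpos : 0 < μ (Set.Icc ((m : ℝ) * R) (((m : ℝ) + 1) * R))
  swap
  · rw [gterm, if_neg hpos]
    have : (0:ℝ) ≤ ((N:ℕ):ℝ) ^ q * ∑ i ∈ Finset.range N, gterm μ c q R (m + ((i:ℤ) - K)) := by
      apply mul_nonneg (Real.rpow_nonneg (by positivity) q)
      exact Finset.sum_nonneg fun i _ => gterm_nonneg μ c q R _
    exact this
  -- positive case
  have hKd : d / 2 ≤ (K : ℝ) := Nat.le_ceil _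
  set s0 : ℝ := ((m : ℝ) - K) * R with hs0
  have hcover : enlarge d ((m : ℝ) * R) (((m : ℝ) + 1) * R) ⊆ Set.Icc s0 (s0 + N * R) := by
    unfold enlarge
    apply Set.Icc_subset_Icc
    · rw [hs0]; nlinarith
    · rw [hs0, hN]; push_cast; nlinarith
  have hsumE : μ (enlarge d ((m : ℝ) * R) (((m : ℝ) + 1) * R)) ≤
      ∑ i ∈ Finset.range N, μ (Set.Icc (s0 + i * R) (s0 + (i + 1) * R)) :=
    le_trans (measure_mono hcover) (measure_Icc_le_sum μ s0 N)
  -- identify the subintervals with grid intervals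
  have hid : ∀ i : ℕ, Set.Icc (s0 + i * R) (s0 + (i + 1) * R) =
      Set.Icc (((m + ((i:ℤ) - K) : ℤ) : ℝ) * R) ((((m + ((i:ℤ) - K) : ℤ) : ℝ) + 1) * R) := by
    intro i; congr 1 <;> · rw [hs0]; push_cast; ring
  set jj : ℕ → ℤ := fun i => m + ((i:ℤ) - K) with hjj
  set u : ℤ → ℝ := fun j => (μ (enlarge c ((j:ℝ) * R) (((j:ℝ) + 1) * R))).toReal with hu
  set J : Finset ℕ := (Finset.range N).filter
    (fun i => 0 < μ (Set.Icc (((jj i : ℤ):ℝ) * R) ((((jj i : ℤ):ℝ) + 1) * R))) with hJ'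
  -- drop zero-measure terms
  have hsumE2 : μ (enlarge d ((m : ℝ) * R) (((m : ℝ) + 1) * R)) ≤
      ∑ i ∈ J, μ (Set.Icc (((jj i : ℤ):ℝ) * R) ((((jj i : ℤ):ℝ) + 1) * R)) := by
    refine le_trans hsumE (le_of_eq ?_)
    rw [hJ', Finset.sum_filter]
    apply Finset.sum_congr rfl
    intro i _
    rw [hid i]
    split
    · rfl
    · rename_i h
      exact le_antisymm (le_of_not_gt h) zero_le
  -- enlarge the subintervals on the c side
  have hsumE3 : μ (enlarge d ((m : ℝ) * R) (((m : ℝ) + 1) * R)) ≤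
      ∑ i ∈ J, μ (enlarge c (((jj i : ℤ):ℝ) * R) ((((jj i : ℤ):ℝ) + 1) * R)) := by
    refine le_trans hsumE2 (Finset.sum_le_sum fun i _ => measure_mono ?_)
    exact Icc_subset_enlarge (le_of_lt hc) (by nlinarith)
  have hJne : J.Nonempty := by
    refine ⟨K, ?_⟩
    rw [hJ', Finset.mem_filter]
    constructor
    · exact Finset.mem_range.2 (by omega)
    · have : jj K = m := by rw [hjj]; simp
      rw [this]; exact hpos
  -- pass to real numbers
  have hfin : ∀ s : Set ℝ, μ s ≠ ⊤ := fun s => measure_ne_top μ s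
  have hsumR : (μ (enlarge d ((m : ℝ) * R) (((m : ℝ) + 1) * R))).toReal ≤
      ∑ i ∈ J, u (jj i) := by
    have := ENNReal.toReal_mono (a := μ (enlarge d ((m : ℝ) * R) (((m : ℝ) + 1) * R)))
      (ENNReal.sum_ne_top.2 fun i _ => hfin _) hsumE3
    refine le_trans this (le_of_eq ?_)
    rw [ENNReal.toReal_sum fun i _ => hfin _]
  obtain ⟨i0, hi0J, hi0max⟩ := J.exists_max_image (fun i => u (jj i)) hJne
  have hu_nonneg : ∀ j, 0 ≤ u j := fun j => ENNReal.toReal_nonneg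
  have hsumN : ∑ i ∈ J, u (jj i) ≤ (N : ℝ) * u (jj i0) := by
    calc ∑ i ∈ J, u (jj i) ≤ J.card • u (jj i0) :=
          Finset.sum_le_card_nsmul J _ _ fun i hi => hi0max i hi
      _ = (J.card : ℝ) * u (jj i0) := nsmul_eq_mul _ _
      _ ≤ (N : ℝ) * u (jj i0) := by
          apply mul_le_mul_of_nonneg_right _ (hu_nonneg _)
          exact_mod_cast Finset.card_le_card (Finset.filter_subset _ _) |>.trans
            (le_of_eq (Finset.card_range N))
  have hmain : (μ (enlarge d ((m : ℝ) * R) (((m : ℝ) + 1) * R))).toReal ≤ (N:ℝ) * u (jj i0) :=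
    le_trans hsumR hsumN
  have hi0pos : 0 < μ (Set.Icc (((jj i0 : ℤ):ℝ) * R) ((((jj i0 : ℤ):ℝ) + 1) * R)) := by
    have := hi0J; rw [hJ', Finset.mem_filter] at this; exact this.2
  have hi0range : i0 ∈ Finset.range N := by
    have := hi0J; rw [hJ', Finset.mem_filter] at this; exact this.1
  calc gterm μ d q R m = (μ (enlarge d ((m : ℝ) * R) (((m : ℝ) + 1) * R))).toReal ^ q := by
        rw [gterm, if_pos hpos]
    _ ≤ ((N:ℝ) * u (jj i0)) ^ q :=
        Real.rpow_le_rpow ENNReal.toReal_nonneg hmain hq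
    _ = (N:ℝ) ^ q * u (jj i0) ^ q := Real.mul_rpow (by positivity) (hu_nonneg _)
    _ = (N:ℝ) ^ q * gterm μ c q R (jj i0) := by rw [gterm, if_pos hi0pos]
    _ ≤ (N:ℝ) ^ q * ∑ i ∈ Finset.range N, gterm μ c q R (jj i) := by
        apply mul_le_mul_of_nonneg_left _ (Real.rpow_nonneg (by positivity) q)
        exact Finset.single_le_sum (fun i _ => gterm_nonneg μ c q R _) hi0range

lemma summable_gterm_shift (μ : Measure ℝ) [NullSingletonClass μ] (hsupp : μ (Set.Icc (0 : ℝ) 1)ᶜ = 0)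
    (a q : ℝ) {R : ℝ} (hR : 0 < R) (t : ℤ) :
    Summable (fun m : ℤ => gterm μ a q R (m + t)) :=
  ((Equiv.addRight t).summable_iff (f := gterm μ a q R)).2 (summable_gterm μ hsupp a q hR)

lemma tsum_gterm_shift (μ : Measure ℝ) (a q R : ℝ) (t : ℤ) :
    ∑' m : ℤ, gterm μ a q R (m + t) = gridSum μ a q R :=
  (Equiv.addRight t).tsum_eq (gterm μ a q R)

lemma lemC (μ : Measure ℝ) [IsProbabilityMeasure μ] [NullSingletonClass μ]
    (hsupp : μ (Set.Icc (0 : ℝ) 1)ᶜ = 0)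
    {c d q : ℝ} (hc : 0 < c) (hd : 0 < d) (hq : 0 ≤ q) :
    ∃ C : ℝ, 0 < C ∧ ∀ R : ℝ, 0 < R → gridSum μ d q R ≤ C * gridSum μ c q R := by
  set K : ℕ := ⌈d/2⌉₊ with hK
  set N : ℕ := 2 * K + 1 with hN
  refine ⟨(N:ℝ) ^ q * N, by positivity, fun R hR => ?_⟩
  have hsumm : ∀ t : ℤ, Summable (fun m : ℤ => gterm μ c q R (m + t)) :=
    fun t => summable_gterm_shift μ hsupp c q hR t
  have hsumm2 : Summable (fun m : ℤ =>
      (N:ℝ) ^ q * ∑ i ∈ Finset.range N, gterm μ c q R (m + ((i:ℤ) - K))) := by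
    apply Summable.mul_left
    exact summable_sum fun i _ => hsumm _
  calc gridSum μ d q R
      ≤ ∑' m : ℤ, (N:ℝ) ^ q * ∑ i ∈ Finset.range N, gterm μ c q R (m + ((i:ℤ) - K)) := by
        rw [gridSum_eq]
        exact Summable.tsum_le_tsum (fun m => termC μ hc hd hq hR m)
          (summable_gterm μ hsupp d q hR) hsumm2
    _ = (N:ℝ) ^ q * ∑' m : ℤ, ∑ i ∈ Finset.range N, gterm μ c q R (m + ((i:ℤ) - K)) :=
        tsum_mul_left
    _ = (N:ℝ) ^ q * ∑ i ∈ Finset.range N, ∑' m : ℤ, gterm μ c q R (m + ((i:ℤ) - K)) := by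
        rw [Summable.tsum_finsetSum fun i _ => hsumm _]
    _ = (N:ℝ) ^ q * ∑ i ∈ Finset.range N, gridSum μ c q R := by
        congr 1
        exact Finset.sum_congr rfl fun i _ => tsum_gterm_shift μ c q R _
    _ = (N:ℝ) ^ q * N * gridSum μ c q R := by
        rw [Finset.sum_const, Finset.card_range, nsmul_eq_mul]; ring

lemma termD (μ : Measure ℝ) [IsProbabilityMeasure μ] [NullSingletonClass μ]
    {c d q : ℝ} (hc : 0 < c) (hd : 0 < d) (hq : q < 0) {R : ℝ} (hR : 0 < R)
    {k : ℕ} (hk : 0 < k) (hdk : d ≤ c * k) (m : ℤ) :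
    gterm μ c q R m ≤ ∑ i ∈ Finset.range k, gterm μ d q (R / k) (k * m + i) := by
  set R' : ℝ := R / k with hR'
  have hR'pos : 0 < R' := by positivity
  by_cases hpos : 0 < μ (Set.Icc ((m : ℝ) * R) (((m : ℝ) + 1) * R))
  swap
  · rw [gterm, if_neg hpos]
    exact Finset.sum_nonneg fun i _ => gterm_nonneg μ d q R' _
  have hkR : (k : ℝ) * R' = R := by
    rw [hR']; field_simp
  have hid : ∀ i : ℕ, Set.Icc ((m:ℝ) * R + i * R') ((m:ℝ) * R + (i + 1) * R') =
      Set.Icc (((k * m + i : ℤ) : ℝ) * R') ((((k * m + i : ℤ) : ℝ) + 1) * R') := by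
    intro i
    congr 1 <;> · push_cast; rw [← hkR]; ring
  have hsum : μ (Set.Icc ((m : ℝ) * R) (((m : ℝ) + 1) * R)) ≤
      ∑ i ∈ Finset.range k, μ (Set.Icc (((k * m + i : ℤ) : ℝ) * R')
        ((((k * m + i : ℤ) : ℝ) + 1) * R')) := by
    have h0 : ((m:ℝ) + 1) * R = (m:ℝ) * R + k * R' := by rw [hkR]; ring
    rw [h0]
    refine le_trans (measure_Icc_le_sum μ ((m:ℝ) * R) k) (le_of_eq ?_)
    exact Finset.sum_congr rfl fun i _ => by rw [hid i]
  have hex : ∃ i0 ∈ Finset.range k, 0 < μ (Set.Icc (((k * m + i0 : ℤ) : ℝ) * R')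
      ((((k * m + i0 : ℤ) : ℝ) + 1) * R')) := by
    by_contra h
    push_neg at h
    have hz : ∀ i ∈ Finset.range k, μ (Set.Icc (((k * m + i : ℤ) : ℝ) * R')
        ((((k * m + i : ℤ) : ℝ) + 1) * R')) = 0 :=
      fun i hi => le_antisymm (h i hi) zero_le
    rw [Finset.sum_congr rfl hz] at hsum
    simp at hsum
    exact absurd hsum (ne_of_gt hpos)
  obtain ⟨i0, hi0r, hi0pos⟩ := hex
  set j : ℤ := k * m + i0 with hj
  have hi0k : (i0 : ℝ) < k := by exact_mod_cast Finset.mem_range.1 hi0r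
  have hi0nn : (0:ℝ) ≤ (i0 : ℝ) := Nat.cast_nonneg _
  have hkpos : (0:ℝ) < k := Nat.cast_pos.2 hk
  have hsubset : enlarge d ((j:ℝ) * R') (((j:ℝ) + 1) * R') ⊆
      enlarge c ((m:ℝ) * R) (((m:ℝ) + 1) * R) := by
    unfold enlarge
    have hjR : (j:ℝ) * R' = (m:ℝ) * R + i0 * R' := by
      rw [hj]; push_cast; rw [← hkR]; ring
    have hdR' : d * R' ≤ c * R := by
      calc d * R' ≤ (c * k) * R' := mul_le_mul_of_nonneg_right hdk hR'pos.le
        _ = c * ((k:ℝ) * R') := by ring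
        _ = c * R := by rw [hkR]
    apply Set.Icc_subset_Icc
    · have h1 : ((m:ℝ)+1) * R - (m:ℝ) * R = R := by ring
      have h2 : ((j:ℝ)+1) * R' - (j:ℝ) * R' = R' := by ring
      rw [h1, h2, hjR]
      nlinarith
    · have h1 : ((m:ℝ)+1) * R - (m:ℝ) * R = R := by ring
      have h2 : ((j:ℝ)+1) * R' - (j:ℝ) * R' = R' := by ring
      have hik : (i0:ℝ) + 1 ≤ k := by exact_mod_cast Finset.mem_range.1 hi0r
      rw [h1, h2]
      nlinarith [hjR, hkR, hdR', hR'pos.le, mul_le_mul_of_nonneg_right hik hR'pos.le]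
  have hfin : ∀ s : Set ℝ, μ s ≠ ⊤ := fun s => measure_ne_top μ s
  have hx : 0 < (μ (enlarge d ((j:ℝ) * R') (((j:ℝ) + 1) * R'))).toReal := by
    apply ENNReal.toReal_pos _ (hfin _)
    refine ne_of_gt (lt_of_lt_of_le hi0pos (measure_mono ?_))
    exact Icc_subset_enlarge (le_of_lt hd) (by nlinarith)
  have hxy : (μ (enlarge d ((j:ℝ) * R') (((j:ℝ) + 1) * R'))).toReal ≤
      (μ (enlarge c ((m:ℝ) * R) (((m:ℝ) + 1) * R))).toReal :=
    ENNReal.toReal_mono (hfin _) (measure_mono hsubset)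
  calc gterm μ c q R m
      = (μ (enlarge c ((m:ℝ) * R) (((m:ℝ) + 1) * R))).toReal ^ q := by
        rw [gterm, if_pos hpos]
    _ ≤ (μ (enlarge d ((j:ℝ) * R') (((j:ℝ) + 1) * R'))).toReal ^ q :=
        Real.rpow_le_rpow_of_nonpos hx hxy (le_of_lt hq)
    _ = gterm μ d q R' j := by rw [gterm, if_pos hi0pos]
    _ ≤ ∑ i ∈ Finset.range k, gterm μ d q R' (k * m + i) := by
        have : gterm μ d q R' j = gterm μ d q R' (k * m + i0) := by rw [hj]
        rw [this]
        exact Finset.single_le_sum (f := fun i : ℕ => gterm μ d q R' (k * m + i))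
          (fun i _ => gterm_nonneg μ d q R' _) hi0r

lemma lemD (μ : Measure ℝ) [IsProbabilityMeasure μ] [NullSingletonClass μ]
    (hsupp : μ (Set.Icc (0 : ℝ) 1)ᶜ = 0)
    {c d q : ℝ} (hc : 0 < c) (hd : 0 < d) (hq : q < 0) :
    ∃ k : ℕ, 0 < k ∧ ∀ R : ℝ, 0 < R →
      gridSum μ c q R ≤ (k : ℝ) * gridSum μ d q (R / k) := by
  set k : ℕ := max 1 ⌈d/c⌉₊ with hk
  have hkpos : 0 < k := lt_of_lt_of_le one_pos (le_max_left _ _)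
  have hdk : d ≤ c * k := by
    have h1 : d / c ≤ (⌈d/c⌉₊ : ℝ) := Nat.le_ceil _
    have h2 : ((⌈d/c⌉₊ : ℕ) : ℝ) ≤ (k : ℝ) := by exact_mod_cast le_max_right 1 ⌈d/c⌉₊
    rw [div_le_iff₀ hc] at h1
    nlinarith
  refine ⟨k, hkpos, fun R hR => ?_⟩
  set R' : ℝ := R / k with hR'
  have hR'pos : 0 < R' := by positivity
  have hinj : ∀ i : ℕ, Function.Injective (fun m : ℤ => (k : ℤ) * m + i) := by
    intro i m n h
    simp only at h
    have : (k:ℤ) * m = (k:ℤ) * n := by omega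
    exact mul_left_cancel₀ (by exact_mod_cast hkpos.ne') this
  have hsummc : ∀ i : ℕ, Summable (fun m : ℤ => gterm μ d q R' ((k:ℤ) * m + i)) :=
    fun i => (summable_gterm μ hsupp d q hR'pos).comp_injective (hinj i)
  calc gridSum μ c q R
      ≤ ∑' m : ℤ, ∑ i ∈ Finset.range k, gterm μ d q R' ((k:ℤ) * m + i) := by
        rw [gridSum_eq]
        exact Summable.tsum_le_tsum (fun m => termD μ hc hd hq hR hkpos hdk m)
          (summable_gterm μ hsupp c q hR)
          (summable_sum fun i _ => hsummc i)
    _ = ∑ i ∈ Finset.range k, ∑' m : ℤ, gterm μ d q R' ((k:ℤ) * m + i) :=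
        Summable.tsum_finsetSum fun i _ => hsummc i
    _ ≤ ∑ i ∈ Finset.range k, gridSum μ d q R' := by
        refine Finset.sum_le_sum fun i _ => ?_
        rw [gridSum_eq]
        exact Summable.tsum_le_tsum_of_inj (fun m : ℤ => (k:ℤ) * m + i) (hinj i)
          (fun c _ => gterm_nonneg μ d q R' c) (fun m => le_rfl)
          (hsummc i) (summable_gterm μ hsupp d q hR'pos)
    _ = (k : ℝ) * gridSum μ d q R' := by
        rw [Finset.sum_const, Finset.card_range, nsmul_eq_mul]

lemma main_imp (μ : Measure ℝ) [IsProbabilityMeasure μ] [NullSingletonClass μ]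
    (hsupp : μ (Set.Icc (0 : ℝ) 1)ᶜ = 0) (q : ℝ) {a b : ℝ} (ha : 0 < a) (hb : 0 < b) (β : ℝ)
    (h : Filter.Tendsto (fun R => R ^ β * gridSum μ a q R)
      (nhdsWithin 0 (Set.Ioi 0)) (nhds 0)) :
    Filter.Tendsto (fun R => R ^ β * gridSum μ b q R)
      (nhdsWithin 0 (Set.Ioi 0)) (nhds 0) := by
  rcases le_or_gt 0 q with hq | hq
  · obtain ⟨C, hC, hbound⟩ := lemC μ hsupp ha hb hq
    refine squeeze_zero' ?_ ?_ (g := fun R => C * (R ^ β * gridSum μ a q R)) ?_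
    · filter_upwards [self_mem_nhdsWithin] with R hR
      exact mul_nonneg (Real.rpow_nonneg (le_of_lt hR) β) (gridSum_nonneg μ b q R)
    · filter_upwards [self_mem_nhdsWithin] with R hR
      calc R ^ β * gridSum μ b q R ≤ R ^ β * (C * gridSum μ a q R) :=
            mul_le_mul_of_nonneg_left (hbound R hR) (Real.rpow_nonneg (le_of_lt hR) β)
        _ = C * (R ^ β * gridSum μ a q R) := by ring
    · simpa using h.const_mul C
  · obtain ⟨k, hk, hbound⟩ := lemD μ hsupp hb ha hq
    have hkR : (0:ℝ) < k := Nat.cast_pos.2 hk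
    have hcomp : Filter.Tendsto (fun R : ℝ => R / (k:ℝ))
        (nhdsWithin 0 (Set.Ioi 0)) (nhdsWithin 0 (Set.Ioi 0)) := by
      rw [tendsto_nhdsWithin_iff]
      constructor
      · have h0 : Filter.Tendsto (fun R : ℝ => R / (k:ℝ)) (nhds 0) (nhds (0 / (k:ℝ))) :=
          tendsto_id.div_const _
        simpa using h0.mono_left nhdsWithin_le_nhds
      · filter_upwards [self_mem_nhdsWithin] with R hR
        exact div_pos hR hkR
    have h2 := h.comp hcomp
    refine squeeze_zero' ?_ ?_
      (g := fun R => ((k:ℝ) * (k:ℝ) ^ β) *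
        ((R / k) ^ β * gridSum μ a q (R / k))) ?_
    · filter_upwards [self_mem_nhdsWithin] with R hR
      exact mul_nonneg (Real.rpow_nonneg (le_of_lt hR) β) (gridSum_nonneg μ b q R)
    · filter_upwards [self_mem_nhdsWithin] with R hR
      have hRk : (R / k) * k = R := div_mul_cancel₀ R (ne_of_gt hkR)
      have hpow : R ^ β = (R / k) ^ β * (k:ℝ) ^ β := by
        rw [← Real.mul_rpow (le_of_lt (div_pos hR hkR)) (le_of_lt hkR), hRk]
      calc R ^ β * gridSum μ b q R ≤ R ^ β * ((k:ℝ) * gridSum μ a q (R / k)) := by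
            apply mul_le_mul_of_nonneg_left (hbound R hR) (Real.rpow_nonneg (le_of_lt hR) β)
        _ = ((k:ℝ) * (k:ℝ) ^ β) * ((R / k) ^ β * gridSum μ a q (R / k)) := by
            rw [hpow]; ring
    · have := h2.const_mul ((k:ℝ) * (k:ℝ) ^ β)
      simpa [Function.comp] using this

end Stmt5

/-- the multifractal moment function `β_a(q)` is independent of the
enlargement parameter `a > 0`, for every `q ∈ ℝ`. -/
theorem stmt_5 (μ : Measure ℝ) [IsProbabilityMeasure μ] [NullSingletonClass μ]
    (hsupp : μ (Set.Icc (0 : ℝ) 1)ᶜ = 0)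
    (q a b : ℝ) (ha : 0 < a) (hb : 0 < b) :
    betaA μ a q = betaA μ b q := by
  have key : ∀ c d : ℝ, 0 < c → 0 < d →
      {β : ℝ | Filter.Tendsto (fun R => R ^ β * gridSum μ c q R)
        (nhdsWithin 0 (Set.Ioi 0)) (nhds 0)} ⊆
      {β : ℝ | Filter.Tendsto (fun R => R ^ β * gridSum μ d q R)
        (nhdsWithin 0 (Set.Ioi 0)) (nhds 0)} :=
    fun c d hc hd β hβ => Stmt5.main_imp μ hsupp q hc hd β hβ
  unfold betaA
  congr 1
  exact Set.Subset.antisymm (key a b ha hb) (key b a hb ha)
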